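/- Let k ≥ 1 and n ≥ 1, and let u and v be words of length n over Σ_k. Let i = lso(u,v) and j = lso(v,u). Then i + j > n if and only if both of the following hold: (a) n + 1 ≤ i + j ≤ 4n/3; and (b) there exist distinct words x, y over Σ_k, each of length i + j − n, and words s, t over Σ_k, such that u = x·s·y·t·x and v = y·t·x·s·y, the pair (x,y) is mutually unbordered, both x·s·y and y·t·x are unbordered, and the shortest right-border of (u,v) is y·t·x (of length i) while the shortest left-border of (u,v) is x·s·y (of length j). -/
import Mathlib


open Classical Finset Filter

/-- A border of `w`: a non-empty word that is both a proper prefix and a suffix of `w`. -/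
def IsBorder {k : ℕ} (w b : List (Fin k)) : Prop :=
  b ≠ [] ∧ b ≠ w ∧ b <+: w ∧ b <:+ w

/-- A word is unbordered if it has no border. -/
def Unbordered {k : ℕ} (w : List (Fin k)) : Prop :=
  ∀ b, ¬ IsBorder w b

/-- A right-border of `(u,v)`: a non-empty proper suffix of `u` that is a proper prefix of `v`. -/
def IsRightBorder {k : ℕ} (u v b : List (Fin k)) : Prop :=
  b ≠ [] ∧ b <:+ u ∧ b ≠ u ∧ b <+: v ∧ b ≠ v

/-- A left-border of `(u,v)`: a non-empty proper prefix of `u` that is a proper suffix of `v`. -/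
def IsLeftBorder {k : ℕ} (u v b : List (Fin k)) : Prop :=
  b ≠ [] ∧ b <+: u ∧ b ≠ u ∧ b <:+ v ∧ b ≠ v

def MutuallyBordered {k : ℕ} (u v : List (Fin k)) : Prop :=
  (∃ b, IsRightBorder u v b) ∧ (∃ b, IsLeftBorder u v b)

def MutuallyUnbordered {k : ℕ} (u v : List (Fin k)) : Prop :=
  (¬ ∃ b, IsRightBorder u v b) ∧ (¬ ∃ b, IsLeftBorder u v b)

def RightBordered {k : ℕ} (u v : List (Fin k)) : Prop :=
  (∃ b, IsRightBorder u v b) ∧ (¬ ∃ b, IsLeftBorder u v b)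

/-- `lso u v`: the length of the shortest right-border of `(u,v)`, or `0` if there is none. -/
noncomputable def lso {k : ℕ} (u v : List (Fin k)) : ℕ :=
  sInf {m | ∃ b : List (Fin k), IsRightBorder u v b ∧ b.length = m}

def IsShortestRightBorder {k : ℕ} (u v b : List (Fin k)) : Prop :=
  IsRightBorder u v b ∧ ∀ b', IsRightBorder u v b' → b.length ≤ b'.length

def IsShortestLeftBorder {k : ℕ} (u v b : List (Fin k)) : Prop :=
  IsLeftBorder u v b ∧ ∀ b', IsLeftBorder u v b' → b.length ≤ b'.length

/-- The finite set of all length-`n` words over `Σ_k`. -/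
def Words (k n : ℕ) : Finset (List (Fin k)) :=
  (Finset.univ : Finset (Fin n → Fin k)).image List.ofFn

/-- `UB k n`: the number of unbordered words of length `n` over `Σ_k`. -/
noncomputable def UB (k n : ℕ) : ℕ :=
  ((Words k n).filter Unbordered).card

/-- `M k n`: the number of mutually bordered pairs of length-`n` words over `Σ_k`. -/
noncomputable def M (k n : ℕ) : ℕ :=
  ((Words k n ×ˢ Words k n).filter (fun p => MutuallyBordered p.1 p.2)).card

/-- `R k n`: the number of right-bordered pairs of length-`n` words over `Σ_k`. -/
noncomputable def R (k n : ℕ) : ℕ :=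
  ((Words k n ×ˢ Words k n).filter (fun p => RightBordered p.1 p.2)).card

/-- `U k n`: the number of mutually unbordered pairs of length-`n` words over `Σ_k`. -/
noncomputable def U (k n : ℕ) : ℕ :=
  ((Words k n ×ˢ Words k n).filter (fun p => MutuallyUnbordered p.1 p.2)).card

/-- `G u v m`: the number of unbordered words of length `m` over `Σ_k` having
`u` as a prefix and `v` as a suffix. -/
noncomputable def G {k : ℕ} (u v : List (Fin k)) (m : ℕ) : ℕ :=
  ((Words k m).filter (fun w => Unbordered w ∧ u <+: w ∧ v <:+ w)).card

lemma isLeftBorder_iff_right {k : ℕ} {u v b : List (Fin k)} :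
    IsLeftBorder u v b ↔ IsRightBorder v u b := by
  constructor <;> rintro ⟨h1, h2, h3, h4, h5⟩ <;> exact ⟨h1, h4, h5, h2, h3⟩

lemma lso_mem_or_zero {k : ℕ} (u v : List (Fin k)) :
    (∃ b, IsRightBorder u v b ∧ b.length = lso u v) ∨ lso u v = 0 := by
  by_cases h : {m | ∃ b : List (Fin k), IsRightBorder u v b ∧ b.length = m}.Nonempty
  · exact Or.inl (Nat.sInf_mem h)
  · right
    rw [lso, Set.not_nonempty_iff_eq_empty.mp h, Nat.sInf_empty]

lemma prefix_length_lt {k : ℕ} {b w : List (Fin k)} (h : b <+: w) (hne : b ≠ w) :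
    b.length < w.length :=
  lt_of_le_of_ne h.length_le (fun he => hne (h.eq_of_length he))

lemma suffix_length_lt {k : ℕ} {b w : List (Fin k)} (h : b <:+ w) (hne : b ≠ w) :
    b.length < w.length :=
  lt_of_le_of_ne h.length_le (fun he => hne (h.eq_of_length he))

theorem stmt2 (k n : ℕ) (hk : 1 ≤ k) (hn : 1 ≤ n) (u v : List (Fin k))
    (hu : u.length = n) (hv : v.length = n) :
    n < lso u v + lso v u ↔
      ((n + 1 ≤ lso u v + lso v u ∧ 3 * (lso u v + lso v u) ≤ 4 * n) ∧
       ∃ x y s t : List (Fin k),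
         x ≠ y ∧
         x.length = lso u v + lso v u - n ∧
         y.length = lso u v + lso v u - n ∧
         u = x ++ s ++ y ++ t ++ x ∧
         v = y ++ t ++ x ++ s ++ y ∧
         MutuallyUnbordered x y ∧
         Unbordered (x ++ s ++ y) ∧ Unbordered (y ++ t ++ x) ∧
         IsShortestRightBorder u v (y ++ t ++ x) ∧
         (y ++ t ++ x).length = lso u v ∧
         IsShortestLeftBorder u v (x ++ s ++ y) ∧
         (x ++ s ++ y).length = lso v u) := by
  constructor
  · intro h
    set i := lso u v with hidef
    set j := lso v u with hjdef
    have hBL : ∀ b : List (Fin k), IsRightBorder u v b → b.length < n := by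
      rintro b ⟨h1, h2, h3, h4, h5⟩
      have := suffix_length_lt h2 h3; omega
    have hBL' : ∀ b : List (Fin k), IsRightBorder v u b → b.length < n := by
      rintro b ⟨h1, h2, h3, h4, h5⟩
      have := suffix_length_lt h2 h3; omega
    have hminR : ∀ b, IsRightBorder u v b → i ≤ b.length := by
      intro b hb; rw [hidef]; exact Nat.sInf_le ⟨b, hb, rfl⟩
    have hminL : ∀ b, IsRightBorder v u b → j ≤ b.length := by
      intro b hb; rw [hjdef]; exact Nat.sInf_le ⟨b, hb, rfl⟩
    obtain ⟨p, hp, hpl⟩ : ∃ b, IsRightBorder u v b ∧ b.length = i := by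
      rcases lso_mem_or_zero u v with h1 | h1
      · exact h1
      · exfalso
        rcases lso_mem_or_zero v u with h2 | h2
        · obtain ⟨b, hb, hbl⟩ := h2; have := hBL' b hb; omega
        · omega
    obtain ⟨q, hq, hql⟩ : ∃ b, IsRightBorder v u b ∧ b.length = j := by
      rcases lso_mem_or_zero v u with h2 | h2
      · exact h2
      · exfalso; have := hBL p hp; omega
    have hpsu : p <:+ u := hp.2.1
    have hppv : p <+: v := hp.2.2.2.1
    have hqpu : q <+: u := hq.2.2.2.1
    have hqsv : q <:+ v := hq.2.1
    have hin : i < n := by have := hBL p hp; omega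
    have hjn : j < n := by have := hBL' q hq; omega
    have hipos : 0 < i := by rw [← hpl]; exact List.length_pos_iff.mpr hp.1
    have hjpos : 0 < j := by rw [← hql]; exact List.length_pos_iff.mpr hq.1
    -- segment representations
    have hpdrop : u.drop (n - i) = p := by
      obtain ⟨w, hw⟩ := hpsu
      have hwl : w.length = n - i := by
        have := congrArg List.length hw; simp at this; omega
      rw [← hw, List.drop_left' hwl]
    have hptake : v.take i = p := by
      obtain ⟨w, hw⟩ := hppv
      rw [← hw, List.take_left' hpl]
    have hqdrop : v.drop (n - j) = q := by
      obtain ⟨w, hw⟩ := hqsv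
      have hwl : w.length = n - j := by
        have := congrArg List.length hw; simp at this; omega
      rw [← hw, List.drop_left' hwl]
    have hqtake : u.take j = q := by
      obtain ⟨w, hw⟩ := hqpu
      rw [← hw, List.take_left' hql]
    set d := i + j - n with hddef
    have hd1 : 1 ≤ d := by omega
    have hdi : d < i := by omega
    have hdj : d < j := by omega
    set x := u.take d with hxdef
    set y := v.take d with hydef
    have hxl : x.length = d := by
      rw [hxdef, List.length_take, hu]; exact min_eq_left (by omega)
    have hyl : y.length = d := by
      rw [hydef, List.length_take, hv]; exact min_eq_left (by omega)
    have hytake : p.take d = y := by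
      rw [← hptake, List.take_take]; rw [hydef]; congr 1
      exact min_eq_left hdi.le
    have hxtakeq : q.take d = x := by
      rw [← hqtake, List.take_take]; rw [hxdef]; congr 1
      exact min_eq_left hdj.le
    have hxdropp : p.drop (i - d) = x := by
      rw [← hptake, List.drop_take, show i - d = n - j from by omega, hqdrop,
        show i - (n - j) = d from by omega, hxtakeq]
    have hydropq : q.drop (j - d) = y := by
      rw [← hqtake, List.drop_take, show j - d = n - i from by omega, hpdrop,
        show j - (n - i) = d from by omega, hytake]
    have hxsuf : u.drop (n - d) = x := by
      rw [show n - d = (n - i) + (i - d) from by omega, ← List.drop_drop, hpdrop, hxdropp]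
    have hysuf : v.drop (n - d) = y := by
      rw [show n - d = (n - j) + (j - d) from by omega, ← List.drop_drop, hqdrop, hydropq]
    have hxu : x <+: u := by rw [hxdef]; exact List.take_prefix _ _
    have hxs : x <:+ u := by rw [← hxsuf]; exact List.drop_suffix _ _
    have hyv : y <+: v := by rw [hydef]; exact List.take_prefix _ _
    have hys : y <:+ v := by rw [← hysuf]; exact List.drop_suffix _ _
    -- inequalities 2d ≤ i, 2d ≤ j
    have h2di : 2 * d ≤ i := by
      by_contra hc
      push_neg at hc
      have hz : y.drop (i - d) = x.take (2 * d - i) := by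
        rw [← hytake, List.drop_take, hxdropp, show d - (i - d) = 2 * d - i from by omega]
      have hzl : (x.take (2 * d - i)).length = 2 * d - i := by
        rw [List.length_take, hxl]; exact min_eq_left (by omega)
      have hzb : IsRightBorder v u (x.take (2 * d - i)) := by
        refine ⟨?_, ?_, ?_, ?_, ?_⟩
        · intro hnil; rw [hnil] at hzl; simp at hzl; omega
        · rw [← hz]; exact (List.drop_suffix _ _).trans hys
        · intro he; rw [he, hv] at hzl; omega
        · exact (List.take_prefix _ _).trans hxu
        · intro he; rw [he, hu] at hzl; omega
      have := hminL _ hzb; omega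
    have h2dj : 2 * d ≤ j := by
      by_contra hc
      push_neg at hc
      have hz : x.drop (j - d) = y.take (2 * d - j) := by
        rw [← hxtakeq, List.drop_take, hydropq, show d - (j - d) = 2 * d - j from by omega]
      have hzl : (y.take (2 * d - j)).length = 2 * d - j := by
        rw [List.length_take, hyl]; exact min_eq_left (by omega)
      have hzb : IsRightBorder u v (y.take (2 * d - j)) := by
        refine ⟨?_, ?_, ?_, ?_, ?_⟩
        · intro hnil; rw [hnil] at hzl; simp at hzl; omega
        · rw [← hz]; exact (List.drop_suffix _ _).trans hxs
        · intro he; rw [he, hu] at hzl; omega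
        · exact (List.take_prefix _ _).trans hyv
        · intro he; rw [he, hv] at hzl; omega
      have := hminR _ hzb; omega
    have hxy : x ≠ y := by
      intro he
      have hb : IsRightBorder u v x := by
        refine ⟨?_, hxs, ?_, ?_, ?_⟩
        · intro hnil; rw [hnil] at hxl; simp at hxl; omega
        · intro h2; rw [h2, hu] at hxl; omega
        · rw [he]; exact hyv
        · intro h2; rw [h2, hv] at hxl; omega
      have := hminR _ hb; omega
    have hmu : MutuallyUnbordered x y := by
      constructor
      · rintro ⟨b, hb1, hb2, hb3, hb4, hb5⟩
        have hbl : b.length < d := by have := suffix_length_lt hb2 hb3; omega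
        have hb : IsRightBorder u v b := by
          refine ⟨hb1, hb2.trans hxs, ?_, hb4.trans hyv, ?_⟩
          · intro he; rw [he, hu] at hbl; omega
          · intro he; rw [he, hv] at hbl; omega
        have := hminR _ hb; omega
      · rintro ⟨b, hb1, hb2, hb3, hb4, hb5⟩
        have hbl : b.length < d := by have := prefix_length_lt hb2 hb3; omega
        have hb : IsRightBorder v u b := by
          refine ⟨hb1, hb4.trans hys, ?_, hb2.trans hxu, ?_⟩
          · intro he; rw [he, hv] at hbl; omega
          · intro he; rw [he, hu] at hbl; omega
        have := hminL _ hb; omega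
    have hpub : Unbordered p := by
      rintro b ⟨hb1, hb2, hb3, hb4⟩
      have hbl : b.length < i := by have := prefix_length_lt hb3 hb2; omega
      have hb : IsRightBorder u v b := by
        refine ⟨hb1, hb4.trans hpsu, ?_, hb3.trans hppv, ?_⟩
        · intro he; rw [he, hu] at hbl; omega
        · intro he; rw [he, hv] at hbl; omega
      have := hminR _ hb; omega
    have hqub : Unbordered q := by
      rintro b ⟨hb1, hb2, hb3, hb4⟩
      have hbl : b.length < j := by have := prefix_length_lt hb3 hb2; omega
      have hb : IsRightBorder v u b := by
        refine ⟨hb1, hb4.trans hqsv, ?_, hb3.trans hqpu, ?_⟩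
        · intro he; rw [he, hv] at hbl; omega
        · intro he; rw [he, hu] at hbl; omega
      have := hminL _ hb; omega
    -- decompositions
    set s := (q.take (j - d)).drop d with hsdef
    set t := (p.take (i - d)).drop d with htdef
    have hqdec : q = x ++ s ++ y := by
      conv_lhs => rw [← List.take_append_drop (j - d) q]
      rw [hydropq]
      congr 1
      conv_lhs => rw [← List.take_append_drop d (q.take (j - d))]
      rw [← hsdef, List.take_take, min_eq_left (by omega : d ≤ j - d), hxtakeq]
    have hpdec : p = y ++ t ++ x := by
      conv_lhs => rw [← List.take_append_drop (i - d) p]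
      rw [hxdropp]
      congr 1
      conv_lhs => rw [← List.take_append_drop d (p.take (i - d))]
      rw [← htdef, List.take_take, min_eq_left (by omega : d ≤ i - d), hytake]
    have hudec : u = x ++ s ++ y ++ t ++ x := by
      have hdropj : u.drop j = t ++ x := by
        rw [show j = (n - i) + d from by omega, ← List.drop_drop, hpdrop, hpdec,
          List.append_assoc]
        exact List.drop_left' hyl
      conv_lhs => rw [← List.take_append_drop j u]
      rw [hqtake, hdropj, hqdec]
      simp [List.append_assoc]
    have hvdec : v = y ++ t ++ x ++ s ++ y := by
      have hdropi : v.drop i = s ++ y := by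
        rw [show i = (n - j) + d from by omega, ← List.drop_drop, hqdrop, hqdec,
          List.append_assoc]
        exact List.drop_left' hxl
      conv_lhs => rw [← List.take_append_drop i v]
      rw [hptake, hdropi, hpdec]
      simp [List.append_assoc]
    refine ⟨⟨by omega, by omega⟩, x, y, s, t, hxy, hxl, hyl, hudec, hvdec, hmu,
      ?_, ?_, ?_, ?_, ?_, ?_⟩
    · rw [← hqdec]; exact hqub
    · rw [← hpdec]; exact hpub
    · rw [← hpdec]
      exact ⟨hp, fun b' hb' => by rw [hpl]; exact hminR b' hb'⟩
    · rw [← hpdec]; exact hpl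
    · rw [← hqdec]
      refine ⟨isLeftBorder_iff_right.mpr hq, fun b' hb' => ?_⟩
      rw [hql]; exact hminL b' (isLeftBorder_iff_right.mp hb')
    · rw [← hqdec]; exact hql
  · rintro ⟨⟨h1, _⟩, _⟩; omega
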